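/- Let j : V → M be the ultrapower embedding of a normal measure W on P_α(α⁺) and ι : V → N the ultrapower embedding of its projection W↾α to a normal measure on α, with k : N → M the factor map defined by k([f]_{W↾α}) = j(f)(α). Then the critical point of k is (α⁺⁺)^N. -/

import Mathlib

noncomputable section

open Filter

/-- `P_α(α⁺)`: subsets of (the ordinals below) `lam` of cardinality `< κ`. -/
def PkL (κ : Cardinal.{0}) (lam : Ordinal.{0}) : Type 1 :=
  {x : Set Ordinal // x ⊆ Set.Iio lam ∧ Cardinal.mk x < Cardinal.lift.{1} κ}

def UFComplete {α : Type*} (κ : Cardinal.{0}) (U : Ultrafilter α) : Prop :=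
  ∀ (ι : Type) (f : ι → Set α), Cardinal.mk ι < κ → (∀ i, f i ∈ U) → (⋂ i, f i) ∈ U

def IsFine (κ : Cardinal.{0}) (lam : Ordinal.{0}) (U : Ultrafilter (PkL κ lam)) : Prop :=
  ∀ β < lam, {x : PkL κ lam | β ∈ x.val} ∈ U

def IsNormalM (κ : Cardinal.{0}) (lam : Ordinal.{0}) (U : Ultrafilter (PkL κ lam)) : Prop :=
  ∀ A : Ordinal → Set (PkL κ lam), (∀ β < lam, A β ∈ U) →
    {x : PkL κ lam | ∀ β ∈ x.val, x ∈ A β} ∈ U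

/-- The ordinal `x ∩ α`. -/
def ordOf (κ : Cardinal.{0}) {lam : Ordinal.{0}} (x : PkL κ lam) : Ordinal :=
  sInf {β | x.val ∩ Set.Iio κ.ord ⊆ Set.Iio β}

/-- The projected measure `W↾α` on the ordinals (concentrating on `α`). -/
def UK (a : Cardinal.{0}) (W : Ultrafilter (PkL a (Order.succ a).ord)) :
    Ultrafilter Ordinal.{0} :=
  W.map (ordOf a)

theorem tendsto_ordOf (a : Cardinal.{0}) (W : Ultrafilter (PkL a (Order.succ a).ord)) :
    Filter.Tendsto (ordOf a) (W : Filter (PkL a (Order.succ a).ord)) (UK a W : Filter Ordinal) := by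
  rw [UK, Ultrafilter.coe_map]; exact Filter.tendsto_map

/-- The factor map `k : N → M`, `k([f]_{W↾α}) = j_W(f)(α) = [f ∘ (x ↦ x ∩ α)]_W`,
acting on the ordinals of the two ultrapowers (represented as germs, i.e. by their
Łoś representatives). -/
def kfac (a : Cardinal.{0}) (W : Ultrafilter (PkL a (Order.succ a).ord))
    (n : Filter.Germ (UK a W : Filter Ordinal) Ordinal) :
    Filter.Germ (W : Filter (PkL a (Order.succ a).ord)) Ordinal :=
  n.compTendsto (ordOf a) (tendsto_ordOf a W)

namespace CritAux

open Cardinal Set Ordinal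

/-! ### Order types of set-relations living in `Type 1`, as small ordinals -/

open scoped Classical in
/-- The order type of a relation on a `Type 1`, down-lifted to `Ordinal.{0}` when possible. -/
def typeLD {α : Type 1} (r : α → α → Prop) : Ordinal.{0} :=
  if hw : IsWellOrder α r then
    (if h : ∃ o : Ordinal.{0}, Ordinal.lift.{1,0} o = @Ordinal.type α r hw then h.choose else 0)
  else 0

theorem typeLD_spec {α : Type 1} (r : α → α → Prop) (hw : IsWellOrder α r)
    (h : ∃ o : Ordinal.{0}, @Ordinal.type α r hw ≤ Ordinal.lift.{1,0} o) :
    Ordinal.lift.{1,0} (typeLD r) = @Ordinal.type α r hw := by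
  obtain ⟨o, ho⟩ := h
  obtain ⟨o', ho'⟩ := Ordinal.mem_range_lift_of_le ho
  rw [typeLD]
  rw [dif_pos hw, dif_pos (⟨o', ho'⟩ : ∃ o'', Ordinal.lift.{1,0} o'' = @Ordinal.type α r hw)]
  exact Exists.choose_spec (⟨o', ho'⟩ : ∃ o'', Ordinal.lift.{1,0} o'' = @Ordinal.type α r hw)

instance subrelSetWO {α : Type*} (r : α → α → Prop) [IsWellOrder α r] (s : Set α) :
    IsWellOrder (Subtype s) (Subrel r s) :=
  inferInstanceAs (IsWellOrder _ (Subrel r (· ∈ s)))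

/-- Order type of a set of ordinals, as a (small) ordinal. -/
def otp0 (s : Set Ordinal.{0}) : Ordinal.{0} :=
  typeLD (Subrel ((· < ·) : Ordinal.{0} → Ordinal.{0} → Prop) s)

theorem type_mono {s t : Set Ordinal.{0}} (hst : s ⊆ t) :
    Ordinal.type (Subrel ((· < ·) : Ordinal.{0} → Ordinal.{0} → Prop) s) ≤
      Ordinal.type (Subrel ((· < ·) : Ordinal.{0} → Ordinal.{0} → Prop) t) := by
  refine RelEmbedding.ordinal_type_le ⟨⟨Set.inclusion hst, Set.inclusion_injective hst⟩, ?_⟩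
  intro u v
  rfl

theorem type_bounded {s : Set Ordinal.{0}} {o : Ordinal.{0}} (hs : s ⊆ Set.Iio o) :
    Ordinal.type (Subrel ((· < ·) : Ordinal.{0} → Ordinal.{0} → Prop) s) ≤ Ordinal.lift.{1,0} o := by
  refine le_trans (type_mono hs) ?_
  rw [← Ordinal.type_lt_Iio o]
  exact le_of_eq rfl

theorem otp0_spec {s : Set Ordinal.{0}} {o : Ordinal.{0}} (hs : s ⊆ Set.Iio o) :
    Ordinal.lift.{1,0} (otp0 s) =
      Ordinal.type (Subrel ((· < ·) : Ordinal.{0} → Ordinal.{0} → Prop) s) :=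
  typeLD_spec _ _ ⟨o, type_bounded hs⟩

theorem otp0_mono {s t : Set Ordinal.{0}} {o : Ordinal.{0}} (hst : s ⊆ t) (ht : t ⊆ Set.Iio o) :
    otp0 s ≤ otp0 t := by
  have h1 := otp0_spec (subset_trans hst ht)
  have h2 := otp0_spec ht
  rw [← Ordinal.lift_le.{1,0}, h1, h2]
  exact type_mono hst

theorem otp0_card {s : Set Ordinal.{0}} {o : Ordinal.{0}} (hs : s ⊆ Set.Iio o) :
    Cardinal.lift.{1,0} (otp0 s).card = Cardinal.mk s := by
  have h1 := otp0_spec hs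
  have : (Ordinal.lift.{1,0} (otp0 s)).card = Cardinal.mk s := by
    rw [h1]; exact Ordinal.card_type _
  rwa [Ordinal.lift_card]


theorem otp0_strict {s t : Set Ordinal.{0}} {θ o : Ordinal.{0}} (hst : s ⊆ t) (hθ : θ ∈ t)
    (hsθ : ∀ ξ ∈ s, ξ < θ) (ht : t ⊆ Set.Iio o) : otp0 s < otp0 t := by
  rw [← Ordinal.lift_lt.{1,0}, otp0_spec (subset_trans hst ht), otp0_spec ht]
  have h1 : Ordinal.type (Subrel ((· < ·) : Ordinal.{0} → Ordinal.{0} → Prop) s) ≤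
      Ordinal.type (Subrel ((· < ·) : Ordinal.{0} → Ordinal.{0} → Prop) ((t ∩ Set.Iio θ : Set Ordinal.{0}))) :=
    type_mono (fun ξ hξ => ⟨hst hξ, hsθ ξ hξ⟩)
  refine lt_of_le_of_lt h1 ?_
  have hiso : Nonempty ((Subrel ((· < ·) : Ordinal.{0} → Ordinal.{0} → Prop) ((t ∩ Set.Iio θ : Set Ordinal.{0}))) ≃r
      (Subrel (Subrel ((· < ·) : Ordinal.{0} → Ordinal.{0} → Prop) t)
        {b | Subrel ((· < ·) : Ordinal.{0} → Ordinal.{0} → Prop) t b ⟨θ, hθ⟩})) := by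
    refine ⟨⟨⟨fun u => ⟨⟨u.1, u.2.1⟩, u.2.2⟩, fun b => ⟨b.1.1, ⟨b.1.2, b.2⟩⟩, ?_, ?_⟩, ?_⟩⟩
    · intro u; rfl
    · intro b; rfl
    · intro u v; exact Iff.rfl
  rw [Ordinal.type_eq.2 hiso]
  exact Ordinal.typein_lt_type _ _

theorem typeLD_eq_of_iso {α : Type 1} (r : α → α → Prop) {o : Ordinal.{0}}
    (f : r ≃r Subrel ((· < ·) : Ordinal.{0} → Ordinal.{0} → Prop) (Set.Iio o)) : typeLD r = o := by
  have hw : IsWellOrder α r := f.toRelEmbedding.isWellOrder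
  have htype : @Ordinal.type α r hw = Ordinal.lift.{1,0} o := by
    rw [@Ordinal.type_eq.{1} α _ r _ hw _ |>.2 ⟨f⟩]
    exact Ordinal.type_lt_Iio o
  have := typeLD_spec r hw ⟨o, le_of_eq htype⟩
  rw [htype] at this
  exact Ordinal.lift_inj.mp this


/-! ### Basic properties of `ordOf` and the measures -/

section Measure

variable {a : Cardinal.{0}} {W : Ultrafilter (PkL a (Order.succ a).ord)}

theorem ord_lt_lam : a.ord < (Order.succ a).ord :=
  Cardinal.ord_lt_ord.2 (Order.lt_succ a)

theorem inter_subset_Iio_ordOf (x : PkL a (Order.succ a).ord) :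
    x.val ∩ Set.Iio a.ord ⊆ Set.Iio (ordOf a x) :=
  csInf_mem (⟨a.ord, fun η hη => hη.2⟩ : Set.Nonempty {β | x.val ∩ Set.Iio a.ord ⊆ Set.Iio β})

theorem exists_of_lt_ordOf {x : PkL a (Order.succ a).ord} {δ : Ordinal}
    (h : δ < ordOf a x) : ∃ η ∈ x.val, η < a.ord ∧ δ ≤ η := by
  have hδ : δ ∉ {β | x.val ∩ Set.Iio a.ord ⊆ Set.Iio β} :=
    notMem_of_lt_csInf h (OrderBot.bddBelow _)
  rw [Set.mem_setOf_eq, Set.not_subset] at hδ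
  obtain ⟨η, hη1, hη2⟩ := hδ
  exact ⟨η, hη1.1, hη1.2, not_lt.mp hη2⟩

theorem ordOf_lt (hreg : a.IsRegular) (x : PkL a (Order.succ a).ord) :
    ordOf a x < a.ord := by
  set S' : Set a.ord.ToType := {i | (((Ordinal.ToType.mk (o := a.ord)).symm i) : Ordinal) ∈ x.val} with hS'
  have hcard : #S' < a := by
    have hequiv : Nonempty (↥S' ≃ ↥(x.val ∩ Set.Iio a.ord)) := by
      refine ⟨⟨fun i => ⟨(((Ordinal.ToType.mk (o := a.ord)).symm i.1) : Ordinal), i.2,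
          ((Ordinal.ToType.mk (o := a.ord)).symm i.1).2⟩,
        fun η => ⟨(Ordinal.ToType.mk (o := a.ord)) ⟨η.1, η.2.2⟩, by
          simp only [hS', Set.mem_setOf_eq, OrderIso.symm_apply_apply]; exact η.2.1⟩, ?_, ?_⟩⟩
      · intro i; simp
      · intro η; simp
    have h1 : Cardinal.lift.{1,0} #S' = #(↥(x.val ∩ Set.Iio a.ord)) := by
      have := Cardinal.lift_mk_eq'.2 hequiv
      rwa [Cardinal.lift_id'] at this
    have h2 : #(↥(x.val ∩ Set.Iio a.ord)) < Cardinal.lift.{1,0} a :=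
      lt_of_le_of_lt (Cardinal.mk_le_mk_of_subset Set.inter_subset_left) x.2.2
    rw [← h1] at h2
    exact Cardinal.lift_lt.mp h2
  have hsup : (⨆ i : S', ((((Ordinal.ToType.mk (o := a.ord)).symm i.1) : Ordinal) + 1)) < a.ord := by
    refine Ordinal.iSup_lt_ord (lt_of_lt_of_le hcard (le_of_eq hreg.cof_eq.symm)) ?_
    intro i
    exact (Cardinal.isSuccLimit_ord hreg.aleph0_le).add_one_lt ((Ordinal.ToType.mk (o := a.ord)).symm i.1).2
  refine lt_of_le_of_lt (csInf_le (OrderBot.bddBelow _) ?_) hsup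
  intro η hη
  have hmem : ((Ordinal.ToType.mk (o := a.ord)) ⟨η, hη.2⟩ : a.ord.ToType) ∈ S' := by
    simp only [hS', Set.mem_setOf_eq, OrderIso.symm_apply_apply]; exact hη.1
  have : η + 1 ≤ ⨆ i : S', ((((Ordinal.ToType.mk (o := a.ord)).symm i.1) : Ordinal) + 1) := by
    have := le_ciSup (f := fun i : S' => ((((Ordinal.ToType.mk (o := a.ord)).symm i.1) : Ordinal) + 1))
      (Ordinal.bddAbove_range _) ⟨_, hmem⟩
    simpa using this
  exact lt_of_lt_of_le (lt_add_one η) this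

theorem eventually_UK {p : Ordinal → Prop} :
    (∀ᶠ ζ in (UK a W : Filter Ordinal), p ζ) ↔
      ∀ᶠ x in (W : Filter (PkL a (Order.succ a).ord)), p (ordOf a x) := by
  rw [UK, Ultrafilter.coe_map, Filter.eventually_map]

theorem eventually_mem (hfine : IsFine a (Order.succ a).ord W) {δ : Ordinal}
    (hδ : δ < (Order.succ a).ord) :
    ∀ᶠ x in (W : Filter (PkL a (Order.succ a).ord)), δ ∈ x.val :=
  hfine δ hδ

theorem eventually_lt_ordOf (hfine : IsFine a (Order.succ a).ord W) {δ : Ordinal}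
    (hδ : δ < a.ord) :
    ∀ᶠ x in (W : Filter (PkL a (Order.succ a).ord)), δ < ordOf a x := by
  filter_upwards [eventually_mem hfine (lt_trans hδ ord_lt_lam)] with x hx
  exact inter_subset_Iio_ordOf x ⟨hx, hδ⟩


theorem lt_add_one_iff' {x y : Ordinal.{0}} : x < y + 1 ↔ x ≤ y := by
  rw [Ordinal.add_one_eq_succ]; exact Order.lt_succ_iff

theorem inter_le_mem (hreg : a.IsRegular) (hcomp : UFComplete a W) {β : Ordinal}
    (hβ : β < a.ord) (B : Ordinal → Set (PkL a (Order.succ a).ord)) (hB : ∀ δ ≤ β, B δ ∈ W) :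
    ∀ᶠ x in (W : Filter (PkL a (Order.succ a).ord)), ∀ δ ≤ β, x ∈ B δ := by
  have hβ1 : β + 1 < a.ord := (Cardinal.isSuccLimit_ord hreg.aleph0_le).add_one_lt hβ
  set g : (β + 1).ToType → Set (PkL a (Order.succ a).ord) :=
    fun i => B (((Ordinal.ToType.mk (o := (β + 1))).symm i : Set.Iio (β + 1)) : Ordinal) with hg
  have hgW : ∀ i, g i ∈ W := by
    intro i
    exact hB _ (lt_add_one_iff'.mp ((Ordinal.ToType.mk (o := (β + 1))).symm i).2)
  have hmk : #((β + 1).ToType) < a := by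
    rw [Cardinal.mk_toType]
    exact Cardinal.lt_ord.mp hβ1
  have hint := hcomp _ g hmk hgW
  refine Filter.mem_of_superset hint ?_
  intro x hx δ hδ
  have hδ1 : δ < β + 1 := lt_add_one_iff'.mpr hδ
  have := Set.mem_iInter.mp hx ((Ordinal.ToType.mk (o := (β + 1))) ⟨δ, hδ1⟩)
  simpa [hg] using this

theorem below_ordOf (hreg : a.IsRegular) (hcomp : UFComplete a W)
    (hnorm : IsNormalM a (Order.succ a).ord W)
    (B : Ordinal → Set (PkL a (Order.succ a).ord)) (hB : ∀ δ < a.ord, B δ ∈ W) :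
    ∀ᶠ x in (W : Filter (PkL a (Order.succ a).ord)), ∀ δ < ordOf a x, x ∈ B δ := by
  have hA : ∀ β < (Order.succ a).ord,
      {x : PkL a (Order.succ a).ord | β < a.ord → ∀ δ ≤ β, x ∈ B δ} ∈ W := by
    intro β _
    by_cases hβ : β < a.ord
    · refine Filter.mem_of_superset (inter_le_mem hreg hcomp hβ B
        (fun δ hδ => hB δ (lt_of_le_of_lt hδ hβ))) ?_
      intro x hx _ δ hδ
      exact hx δ hδ
    · refine Filter.mem_of_superset Filter.univ_mem ?_
      intro x _ h
      exact absurd h hβ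
  have := hnorm _ hA
  refine Filter.mem_of_superset this ?_
  intro x hx δ hδ
  obtain ⟨η, hη1, hη2, hη3⟩ := exists_of_lt_ordOf hδ
  exact hx η hη1 hη2 δ hη3

theorem below_ordOf₂ (hreg : a.IsRegular) (hcomp : UFComplete a W)
    (hnorm : IsNormalM a (Order.succ a).ord W)
    (B : Ordinal → Ordinal → Set (PkL a (Order.succ a).ord))
    (hB : ∀ δ < a.ord, ∀ η < a.ord, B δ η ∈ W) :
    ∀ᶠ x in (W : Filter (PkL a (Order.succ a).ord)),
      ∀ δ < ordOf a x, ∀ η < ordOf a x, x ∈ B δ η := by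
  have := below_ordOf hreg hcomp hnorm
    (fun δ => {x | δ < a.ord → ∀ η < ordOf a x, x ∈ B δ η}) ?_
  · refine Filter.mem_of_superset this ?_
    intro x hx δ hδ η hη
    exact hx δ hδ (lt_trans hδ (ordOf_lt hreg x)) η hη
  · intro δ hδ
    have := below_ordOf hreg hcomp hnorm (B δ) (hB δ hδ)
    refine Filter.mem_of_superset this ?_
    intro x hx _ η hη
    exact hx η hη

theorem closure₁ (hfine : IsFine a (Order.succ a).ord W)
    (hnorm : IsNormalM a (Order.succ a).ord W) (t : Ordinal → Ordinal)
    (ht : ∀ η < (Order.succ a).ord, t η < (Order.succ a).ord) :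
    ∀ᶠ x in (W : Filter (PkL a (Order.succ a).ord)), ∀ η ∈ x.val, t η ∈ x.val := by
  refine hnorm (fun η => {x | t η ∈ x.val}) ?_
  intro η hη
  exact hfine _ (ht η hη)

theorem closure₂ (hfine : IsFine a (Order.succ a).ord W)
    (hnorm : IsNormalM a (Order.succ a).ord W) (t : Ordinal → Ordinal → Ordinal)
    (ht : ∀ δ < (Order.succ a).ord, ∀ η < (Order.succ a).ord, t δ η < (Order.succ a).ord) :
    ∀ᶠ x in (W : Filter (PkL a (Order.succ a).ord)),
      ∀ δ ∈ x.val, ∀ η ∈ x.val, t δ η ∈ x.val := by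
  have := hnorm (fun δ => {x | δ < (Order.succ a).ord → ∀ η ∈ x.val, t δ η ∈ x.val}) ?_
  · refine Filter.mem_of_superset this ?_
    intro x hx δ hδ η hη
    exact hx δ hδ (x.2.1 hδ) η hη
  · intro δ hδ
    by_cases hδ' : δ < (Order.succ a).ord
    · refine Filter.mem_of_superset (closure₁ hfine hnorm (t δ) (ht δ hδ')) ?_
      intro x hx _
      exact hx
    · exact absurd hδ hδ'


theorem exists_pairing (hreg : a.IsRegular) :
    ∃ p : Ordinal.{0} → Ordinal.{0} → Ordinal.{0},
      (∀ ξ η, ξ < a.ord → η < a.ord → p ξ η < a.ord) ∧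
      (∀ ξ η ξ' η', ξ < a.ord → η < a.ord → ξ' < a.ord → η' < a.ord →
        p ξ η = p ξ' η' → ξ = ξ' ∧ η = η') := by
  have hmk : #(↥(Set.Iio a.ord) × ↥(Set.Iio a.ord)) = #(↥(Set.Iio a.ord)) := by
    rw [Cardinal.mk_prod, Cardinal.lift_id, Ordinal.mk_Iio_ordinal,
      Cardinal.card_ord, ← Cardinal.lift_mul, Cardinal.mul_eq_self hreg.aleph0_le]
  obtain ⟨q⟩ := Cardinal.eq.mp hmk
  refine ⟨fun ξ η => if h : ξ < a.ord ∧ η < a.ord then (q (⟨ξ, h.1⟩, ⟨η, h.2⟩) : Ordinal) else 0,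
    ?_, ?_⟩
  · intro ξ η hξ hη
    dsimp only
    rw [dif_pos ⟨hξ, hη⟩]
    exact (q (⟨ξ, hξ⟩, ⟨η, hη⟩)).2
  · intro ξ η ξ' η' hξ hη hξ' hη' heq
    dsimp only at heq
    rw [dif_pos ⟨hξ, hη⟩, dif_pos ⟨hξ', hη'⟩] at heq
    have := q.injective (Subtype.ext heq)
    refine ⟨congrArg (fun z => (z.1 : Ordinal)) this, congrArg (fun z => (z.2 : Ordinal)) this⟩

theorem ordOf_closed_pairing (hreg : a.IsRegular) (hcomp : UFComplete a W)
    (hfine : IsFine a (Order.succ a).ord W) (hnorm : IsNormalM a (Order.succ a).ord W)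
    {p : Ordinal → Ordinal → Ordinal}
    (hp : ∀ ξ η, ξ < a.ord → η < a.ord → p ξ η < a.ord) :
    ∀ᶠ x in (W : Filter (PkL a (Order.succ a).ord)),
      ∀ ξ < ordOf a x, ∀ η < ordOf a x, p ξ η < ordOf a x := by
  refine below_ordOf₂ hreg hcomp hnorm (fun ξ η => {x | p ξ η < ordOf a x}) ?_
  intro ξ hξ η hη
  exact eventually_lt_ordOf hfine (hp ξ η hξ hη)

theorem exists_injOn {s t : Set Ordinal.{0}} (h : #s ≤ #t) :
    ∃ g : Ordinal.{0} → Ordinal.{0}, Set.InjOn g s ∧ Set.MapsTo g s t := by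
  classical
  obtain ⟨emb⟩ := (Cardinal.le_def _ _).mp h
  refine ⟨fun ξ => if hξ : ξ ∈ s then (emb ⟨ξ, hξ⟩ : Ordinal) else 0, ?_, ?_⟩
  · intro ξ hξ ξ' hξ' heq
    dsimp only at heq
    rw [dif_pos hξ, dif_pos hξ'] at heq
    exact congrArg Subtype.val (emb.injective (Subtype.ext heq))
  · intro ξ hξ
    have : (if hξ' : ξ ∈ s then (emb ⟨ξ, hξ'⟩ : Ordinal) else 0) ∈ t := by
      rw [dif_pos hξ]
      exact (emb ⟨ξ, hξ⟩).2
    exact this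

/-- The central lemma: every `W`-function below `(ordOf ·).card⁺` factors through `ordOf`
modulo `W`.  This is the combinatorial core of `crit k ≥ (α⁺⁺)^N`: subsets of `α`
appearing in the `W`-ultrapower are induced by actual subsets of `α`. -/
theorem star1 (hreg : a.IsRegular) (hcomp : UFComplete a W)
    (hfine : IsFine a (Order.succ a).ord W) (hnorm : IsNormalM a (Order.succ a).ord W)
    (G : PkL a (Order.succ a).ord → Ordinal)
    (hG : ∀ᶠ x in (W : Filter (PkL a (Order.succ a).ord)),
      G x < (Order.succ (ordOf a x).card).ord) :
    ∃ F : Ordinal → Ordinal,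
      ∀ᶠ x in (W : Filter (PkL a (Order.succ a).ord)), F (ordOf a x) = G x := by
  classical
  obtain ⟨p, hp1, hp2⟩ := exists_pairing hreg
  set e : PkL a (Order.succ a).ord → Ordinal → Ordinal := fun x =>
    if h : ∃ g : Ordinal → Ordinal, Set.InjOn g (Set.Iio (G x)) ∧
        Set.MapsTo g (Set.Iio (G x)) (Set.Iio (ordOf a x)) then h.choose else id with he_def
  have he : ∀ x : PkL a (Order.succ a).ord, G x < (Order.succ (ordOf a x).card).ord →
      Set.InjOn (e x) (Set.Iio (G x)) ∧
        Set.MapsTo (e x) (Set.Iio (G x)) (Set.Iio (ordOf a x)) := by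
    intro x hx
    have hcard : #(Set.Iio (G x)) ≤ #(Set.Iio (ordOf a x)) := by
      rw [Ordinal.mk_Iio_ordinal, Ordinal.mk_Iio_ordinal, Cardinal.lift_le]
      exact Order.lt_succ_iff.mp (Cardinal.lt_ord.mp hx)
    have hex := exists_injOn hcard
    rw [he_def]
    simp only
    rw [dif_pos hex]
    exact hex.choose_spec
  set Sx : PkL a (Order.succ a).ord → Set Ordinal := fun x =>
    {θ | ∃ u v : Ordinal, u ≤ v ∧ v < G x ∧ θ = p (e x u) (e x v)} with hSx_def
  set S : Set Ordinal := {θ | θ < a.ord ∧ {x | θ ∈ Sx x} ∈ W} with hS_def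
  refine ⟨fun ζ => typeLD
    (fun u v : ↥{w : Ordinal | w < ζ ∧ p w w ∈ S} => u.1 ≠ v.1 ∧ p u.1 v.1 ∈ S), ?_⟩
  have hE3 : ∀ᶠ x in (W : Filter (PkL a (Order.succ a).ord)),
      ∀ θ < ordOf a x, (θ ∈ S ↔ θ ∈ Sx x) := by
    refine below_ordOf hreg hcomp hnorm (fun θ => {x | θ ∈ S ↔ θ ∈ Sx x}) ?_
    intro θ hθ
    by_cases hθS : {x | θ ∈ Sx x} ∈ W
    · have hθinS : θ ∈ S := ⟨hθ, hθS⟩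
      refine Filter.mem_of_superset hθS ?_
      intro x hx
      exact ⟨fun _ => hx, fun _ => hθinS⟩
    · have hθnotS : θ ∉ S := fun hc => hθS hc.2
      refine Filter.mem_of_superset (Ultrafilter.compl_mem_iff_notMem.mpr hθS) ?_
      intro x hx
      exact ⟨fun hc => absurd hc hθnotS, fun hc => absurd hc hx⟩
  filter_upwards [hG, ordOf_closed_pairing hreg hcomp hfine hnorm hp1, hE3] with x h1 h2 h3
  obtain ⟨hinj, hmaps⟩ := he x h1
  have hπa : ordOf a x < a.ord := ordOf_lt hreg x
  have hSxsub : ∀ θ ∈ Sx x, θ < ordOf a x := by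
    rintro θ ⟨u, v, huv, hv, rfl⟩
    exact h2 _ (hmaps (lt_of_le_of_lt huv hv)) _ (hmaps hv)
  -- the isomorphism between `Iio (G x)` and the decoded relation at `ordOf a x`
  set fld : Set Ordinal := {w : Ordinal | w < ordOf a x ∧ p w w ∈ S} with hfld_def
  set φ : ↥(Set.Iio (G x)) → ↥fld := fun u => ⟨e x u.1, by
    refine ⟨hmaps u.2, ?_⟩
    have hmem : p (e x u.1) (e x u.1) ∈ Sx x := ⟨u.1, u.1, le_refl _, u.2, rfl⟩
    exact (h3 _ (hSxsub _ hmem)).mpr hmem⟩ with hφ_def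
  have hφinj : Function.Injective φ := by
    intro u v huv
    have := congrArg Subtype.val huv
    exact Subtype.ext (hinj u.2 v.2 this)
  have hφsurj : Function.Surjective φ := by
    rintro ⟨w, hw1, hw2⟩
    have hwSx : p w w ∈ Sx x := (h3 _ (h2 _ hw1 _ hw1)).mp hw2
    obtain ⟨u, v, huv, hv, heq⟩ := hwSx
    have hu : u < G x := lt_of_le_of_lt huv hv
    have heu : w = e x u ∧ w = e x v := by
      refine hp2 w w (e x u) (e x v) (lt_trans hw1 hπa) (lt_trans hw1 hπa)
        (lt_trans (hmaps hu) hπa) (lt_trans (hmaps hv) hπa) heq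
    refine ⟨⟨u, hu⟩, Subtype.ext heu.1.symm⟩
  have hφrel : ∀ u v : ↥(Set.Iio (G x)),
      ((φ u).1 ≠ (φ v).1 ∧ p (φ u).1 (φ v).1 ∈ S) ↔ u.1 < v.1 := by
    intro u v
    constructor
    · rintro ⟨hne, hpS⟩
      have hlt : p (e x u.1) (e x v.1) < ordOf a x :=
        h2 _ (hmaps u.2) _ (hmaps v.2)
      have hpSx : p (e x u.1) (e x v.1) ∈ Sx x := (h3 _ hlt).mp hpS
      obtain ⟨u', v', hu'v', hv', heq⟩ := hpSx
      have hu' : u' < G x := lt_of_le_of_lt hu'v' hv'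
      have := hp2 (e x u.1) (e x v.1) (e x u') (e x v')
        (lt_trans (hmaps u.2) hπa) (lt_trans (hmaps v.2) hπa)
        (lt_trans (hmaps hu') hπa) (lt_trans (hmaps hv') hπa) heq
      have huu' : u.1 = u' := hinj u.2 hu' this.1
      have hvv' : v.1 = v' := hinj v.2 hv' this.2
      have hle : u.1 ≤ v.1 := by rw [huu', hvv']; exact hu'v'
      refine lt_of_le_of_ne hle ?_
      intro hc
      exact hne (by rw [hφ_def]; simp only; rw [hc])
    · intro hlt
      have hmem : p (e x u.1) (e x v.1) ∈ Sx x := ⟨u.1, v.1, le_of_lt hlt, v.2, rfl⟩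
      refine ⟨?_, (h3 _ (hSxsub _ hmem)).mpr hmem⟩
      intro hc
      exact absurd (hinj u.2 v.2 hc) (ne_of_lt hlt)
  have hiso : (fun u v : ↥fld => u.1 ≠ v.1 ∧ p u.1 v.1 ∈ S) ≃r
      Subrel ((· < ·) : Ordinal → Ordinal → Prop) (Set.Iio (G x)) := by
    refine RelIso.symm ⟨Equiv.ofBijective φ ⟨hφinj, hφsurj⟩, ?_⟩
    intro u v
    exact hφrel u v
  exact typeLD_eq_of_iso _ hiso


/-- Factorization through `ordOf` for functions bounded below `((ordOf ·).card)⁺⁺`,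
with a strict pointwise bound witnessing `[f] < (α⁺⁺)^N`. -/
theorem star (hreg : a.IsRegular) (hcomp : UFComplete a W)
    (hfine : IsFine a (Order.succ a).ord W) (hnorm : IsNormalM a (Order.succ a).ord W)
    (f : Ordinal → Ordinal) (hf : ∀ ζ, f ζ < (Order.succ (Order.succ ζ.card)).ord)
    (G : PkL a (Order.succ a).ord → Ordinal)
    (hG : ∀ᶠ x in (W : Filter (PkL a (Order.succ a).ord)), G x < f (ordOf a x)) :
    ∃ F : Ordinal → Ordinal,
      ∀ᶠ x in (W : Filter (PkL a (Order.succ a).ord)), F (ordOf a x) = G x := by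
  classical
  have hcard : ∀ ζ : Ordinal, #(Set.Iio (f ζ)) ≤ #(Set.Iio ((Order.succ ζ.card).ord)) := by
    intro ζ
    rw [Ordinal.mk_Iio_ordinal, Ordinal.mk_Iio_ordinal, Cardinal.lift_le, Cardinal.card_ord]
    exact Order.lt_succ_iff.mp (Cardinal.lt_ord.mp (hf ζ))
  set i : Ordinal → Ordinal → Ordinal := fun ζ => (exists_injOn (hcard ζ)).choose with hi_def
  have hi : ∀ ζ, Set.InjOn (i ζ) (Set.Iio (f ζ)) ∧
      Set.MapsTo (i ζ) (Set.Iio (f ζ)) (Set.Iio ((Order.succ ζ.card).ord)) := fun ζ =>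
    (exists_injOn (hcard ζ)).choose_spec
  set G' : PkL a (Order.succ a).ord → Ordinal := fun x => i (ordOf a x) (G x) with hG'_def
  have hG' : ∀ᶠ x in (W : Filter (PkL a (Order.succ a).ord)),
      G' x < (Order.succ (ordOf a x).card).ord := by
    filter_upwards [hG] with x hx
    exact (hi (ordOf a x)).2 hx
  obtain ⟨F', hF'⟩ := star1 hreg hcomp hfine hnorm G' hG'
  refine ⟨fun ζ => if h : ∃ ξ, ξ < f ζ ∧ i ζ ξ = F' ζ then h.choose else 0, ?_⟩
  filter_upwards [hG, hF'] with x h1 h2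
  have hex : ∃ ξ, ξ < f (ordOf a x) ∧ i (ordOf a x) ξ = F' (ordOf a x) := ⟨G x, h1, h2.symm⟩
  rw [dif_pos hex]
  obtain ⟨hs1, hs2⟩ := hex.choose_spec
  refine (hi (ordOf a x)).1 hs1 h1 ?_
  rw [hs2, h2]


theorem lam_pos : (0 : Ordinal) < (Order.succ a).ord := by
  rw [Cardinal.lt_ord, Ordinal.card_zero]
  exact lt_of_le_of_lt (Cardinal.zero_le a) (Order.lt_succ a)

/-- Almost every `x` has size at most `((ordOf a x).card)⁺`. -/
theorem size_le (hreg : a.IsRegular) (hcomp : UFComplete a W)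
    (hfine : IsFine a (Order.succ a).ord W) (hnorm : IsNormalM a (Order.succ a).ord W) :
    ∀ᶠ x in (W : Filter (PkL a (Order.succ a).ord)),
      Cardinal.mk x.val ≤ Cardinal.lift.{1,0} (Order.succ (ordOf a x).card) := by
  classical
  -- injections from `Iio δ` into `Iio a.ord` for `δ < (succ a).ord`
  have hcard : ∀ δ : Ordinal, δ < (Order.succ a).ord →
      #(Set.Iio δ) ≤ #(Set.Iio a.ord) := by
    intro δ hδ
    rw [Ordinal.mk_Iio_ordinal, Ordinal.mk_Iio_ordinal, Cardinal.lift_le, Cardinal.card_ord]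
    exact Order.lt_succ_iff.mp (Cardinal.lt_ord.mp hδ)
  set jm : Ordinal → Ordinal → Ordinal := fun δ =>
    if h : δ < (Order.succ a).ord then (exists_injOn (hcard δ h)).choose else id with hjm_def
  have hjm : ∀ δ < (Order.succ a).ord, Set.InjOn (jm δ) (Set.Iio δ) ∧
      Set.MapsTo (jm δ) (Set.Iio δ) (Set.Iio a.ord) := by
    intro δ hδ
    rw [hjm_def]
    simp only
    rw [dif_pos hδ]
    exact (exists_injOn (hcard δ hδ)).choose_spec
  have hclos := closure₂ hfine hnorm (fun δ η => if η < δ then jm δ η else 0) ?_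
  swap
  · intro δ hδ η hη
    by_cases hlt : η < δ
    · simp only [if_pos hlt]
      exact lt_trans ((hjm δ hδ).2 hlt) ord_lt_lam
    · simp only [if_neg hlt]
      exact lam_pos
  filter_upwards [hclos] with x hx
  set r : ↥x.val → ↥x.val → Prop := Subrel ((· < ·) : Ordinal → Ordinal → Prop) (· ∈ x.val) with hr_def
  have hclaim : ∀ ι : Ordinal.{1}, ι < Ordinal.type r →
      ι.card ≤ Cardinal.lift.{1,0} (ordOf a x).card := by
    intro ι hι
    obtain ⟨b, rfl⟩ := Ordinal.typein_surj r hι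
    rw [← Ordinal.type_subrel, Ordinal.card_type]
    have hmk2 : #(↥(x.val ∩ Set.Iio a.ord)) ≤ Cardinal.lift.{1,0} (ordOf a x).card := by
      refine le_trans (Cardinal.mk_le_mk_of_subset (inter_subset_Iio_ordOf x)) ?_
      rw [Ordinal.mk_Iio_ordinal]
    refine le_trans ?_ hmk2
    have hblam : (b : Ordinal) < (Order.succ a).ord := x.2.1 b.2
    refine Cardinal.mk_le_of_injective (f := fun b' : {b' : ↥x.val // r b' b} =>
      (⟨jm b.1 b'.1.1, ?_, ?_⟩ : ↥(x.val ∩ Set.Iio a.ord))) ?_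
    · have := hx b.1 b.2 b'.1.1 b'.1.2
      simp only [if_pos (show (b'.1.1 : Ordinal) < b.1 from b'.2)] at this
      exact this
    · exact (hjm b.1 hblam).2 b'.2
    · intro u v huv
      have h1 : jm b.1 u.1.1 = jm b.1 v.1.1 := congrArg Subtype.val huv
      have := (hjm b.1 hblam).1 u.2 v.2 h1
      exact Subtype.ext (Subtype.ext this)
  have hmkcard : Cardinal.mk x.val = (Ordinal.type r).card := (Ordinal.card_type r).symm
  rw [hmkcard, Cardinal.lift_succ]
  by_contra hcon
  push_neg at hcon
  have h2 : (Cardinal.lift.{1,0} (Order.succ (ordOf a x).card)).ord < Ordinal.type r := by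
    refine lt_of_lt_of_le (Cardinal.ord_lt_ord.2 ?_) (Cardinal.ord_card_le _)
    rw [Cardinal.lift_succ]
    exact hcon
  have := hclaim _ h2
  rw [Cardinal.card_ord, Cardinal.lift_succ] at this
  exact absurd this (not_le_of_gt (Order.lt_succ _))


/-- Strict inequality of germs over an ultrafilter is eventual strict inequality. -/
theorem germ_lt_iff {α : Type 1} {U : Ultrafilter α} {u v : α → Ordinal.{0}} :
    (↑u : Filter.Germ (U : Filter α) Ordinal) < ↑v ↔ ∀ᶠ i in (U : Filter α), u i < v i := by
  constructor
  · intro h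
    have hle : ∀ᶠ i in (U : Filter α), u i ≤ v i := Filter.Germ.coe_le.mp h.le
    have hne : {i | u i = v i} ∉ U := by
      intro hmem
      exact h.ne (Filter.Germ.coe_eq.mpr hmem)
    have hne' : {i | u i = v i}ᶜ ∈ U := Ultrafilter.compl_mem_iff_notMem.mpr hne
    filter_upwards [hle, hne'] with i h1 h2
    exact lt_of_le_of_ne h1 h2
  · intro h
    refine lt_of_le_of_ne (Filter.Germ.coe_le.mpr (h.mono fun i hi => le_of_lt hi)) ?_
    intro heq
    obtain ⟨i, hi1, hi2⟩ := (h.and (Filter.Germ.coe_eq.mp heq)).exists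
    exact absurd hi2 (ne_of_lt hi1)

theorem f0_pos (ζ : Ordinal) : (0 : Ordinal) < (Order.succ (Order.succ ζ.card)).ord := by
  rw [Cardinal.lt_ord, Ordinal.card_zero]
  exact lt_of_le_of_lt (Cardinal.zero_le _) (lt_of_lt_of_le (Order.lt_succ _) (Order.le_succ _))

theorem hpow_gch (hreg : a.IsRegular)
    (hGCH : ∀ c : Cardinal.{0}, Cardinal.aleph0 ≤ c → 2 ^ c = Order.succ c) :
    (Order.succ a) ^ a = Order.succ a := by
  have h2a : (2 : Cardinal.{0}) ^ a = Order.succ a := hGCH a hreg.aleph0_le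
  apply le_antisymm
  · calc (Order.succ a) ^ a ≤ (2 ^ a) ^ a :=
          Cardinal.power_le_power_right (le_of_eq h2a.symm)
      _ = 2 ^ (a * a) := by rw [← Cardinal.power_mul]
      _ = 2 ^ a := by rw [Cardinal.mul_eq_self hreg.aleph0_le]
      _ = Order.succ a := h2a
  · have h2 : (2 : Cardinal.{0}) ≤ Order.succ a :=
      le_trans (Cardinal.nat_lt_aleph0 2).le (le_trans hreg.aleph0_le (Order.le_succ a))
    calc Order.succ a = 2 ^ a := h2a.symm
      _ ≤ (Order.succ a) ^ a := Cardinal.power_le_power_right h2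

/-- Counting: the collapse of the germ of `ζ ↦ ζ⁺⁺` is below `α⁺⁺`. -/
theorem gamma_lt_ssa (hreg : a.IsRegular)
    (hGCH : ∀ c : Cardinal.{0}, Cardinal.aleph0 ≤ c → 2 ^ c = Order.succ c)
    (oN : Filter.Germ (UK a W : Filter Ordinal) Ordinal ≃o Ordinal) :
    oN ((fun ζ : Ordinal => (Order.succ (Order.succ ζ.card)).ord :
        Filter.Germ (UK a W : Filter Ordinal) Ordinal)) <
      (Order.succ (Order.succ a)).ord := by
  classical
  set f₀ : Ordinal → Ordinal := fun ζ => (Order.succ (Order.succ ζ.card)).ord with hf₀_def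
  set γ := oN (↑f₀ : Filter.Germ (UK a W : Filter Ordinal) Ordinal) with hγ_def
  have hrep : ∀ β : ↥(Set.Iio γ), ∃ u : Ordinal → Ordinal,
      (↑u : Filter.Germ (UK a W : Filter Ordinal) Ordinal) = oN.symm β.1 := fun β =>
    (oN.symm β.1).inductionOn (fun v => ⟨v, rfl⟩)
  set R : ↥(Set.Iio γ) → Ordinal → Ordinal := fun β => (hrep β).choose with hR_def
  have hRspec : ∀ β : ↥(Set.Iio γ),
      (↑(R β) : Filter.Germ (UK a W : Filter Ordinal) Ordinal) = oN.symm β.1 := fun β =>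
    (hrep β).choose_spec
  have hUKa : ∀ᶠ ζ in (UK a W : Filter Ordinal), ζ < a.ord :=
    eventually_UK.mpr (Filter.Eventually.of_forall (fun x => ordOf_lt hreg x))
  have hRlt : ∀ β : ↥(Set.Iio γ), ∀ᶠ ζ in (UK a W : Filter Ordinal), R β ζ < f₀ ζ := by
    intro β
    refine germ_lt_iff.mp ?_
    rw [hRspec β]
    have h1 : oN.symm β.1 < oN.symm γ := oN.symm.strictMono β.2
    have h2 : oN.symm γ = (↑f₀ : Filter.Germ (UK a W : Filter Ordinal) Ordinal) := by
      rw [hγ_def]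
      exact OrderIso.symm_apply_apply _ _
    rwa [h2] at h1
  set J : ↥(Set.Iio γ) → (↥(Set.Iio a.ord) → ↥(Set.Iio (Order.succ a).ord)) := fun β ζ =>
    if hv : R β ζ.1 < (Order.succ a).ord then ⟨R β ζ.1, hv⟩ else ⟨0, lam_pos⟩ with hJ_def
  have hJinj : Function.Injective J := by
    intro β β' hJeq
    have hgerm : (↑(R β) : Filter.Germ (UK a W : Filter Ordinal) Ordinal) = ↑(R β') := by
      refine Filter.Germ.coe_eq.mpr ?_
      filter_upwards [hUKa, hRlt β, hRlt β'] with ζ h1 h2 h3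
      have hcard : ζ.card < a := Cardinal.lt_ord.mp h1
      have hbound : f₀ ζ ≤ (Order.succ a).ord := by
        refine Cardinal.ord_le_ord.2 ?_
        exact Order.succ_le_succ (Order.succ_le_of_lt hcard)
      have hv : R β ζ < (Order.succ a).ord := lt_of_lt_of_le h2 hbound
      have hv' : R β' ζ < (Order.succ a).ord := lt_of_lt_of_le h3 hbound
      have := congrFun hJeq ⟨ζ, h1⟩
      rw [hJ_def] at this
      simp only [dif_pos hv, dif_pos hv'] at this
      exact congrArg Subtype.val this
    have := congrArg oN (by rw [← hRspec β, ← hRspec β', hgerm] :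
      oN.symm β.1 = oN.symm β'.1)
    rw [OrderIso.apply_symm_apply, OrderIso.apply_symm_apply] at this
    exact Subtype.ext this
  have hmkle : #(↥(Set.Iio γ)) ≤ #(↥(Set.Iio a.ord) → ↥(Set.Iio (Order.succ a).ord)) :=
    Cardinal.mk_le_of_injective hJinj
  have hmkarrow : #(↥(Set.Iio a.ord) → ↥(Set.Iio (Order.succ a).ord)) =
      Cardinal.lift.{1,0} (Order.succ a) := by
    rw [← Cardinal.power_def, Ordinal.mk_Iio_ordinal, Ordinal.mk_Iio_ordinal,
      Cardinal.card_ord, Cardinal.card_ord, ← Cardinal.lift_power, hpow_gch hreg hGCH]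
  rw [hmkarrow, Ordinal.mk_Iio_ordinal, Cardinal.lift_le] at hmkle
  rw [Cardinal.lt_ord]
  exact lt_of_le_of_lt hmkle (Order.lt_succ _)

/-- The family of functions representing the ordinals below `α⁺⁺` inside `M`. -/
theorem exists_family (hreg : a.IsRegular) (hcomp : UFComplete a W)
    (hfine : IsFine a (Order.succ a).ord W) (hnorm : IsNormalM a (Order.succ a).ord W) :
    ∃ g : Ordinal → PkL a (Order.succ a).ord → Ordinal,
      (∀ β < (Order.succ (Order.succ a)).ord,
        ∀ᶠ x in (W : Filter (PkL a (Order.succ a).ord)),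
          g β x < (Order.succ (Order.succ (ordOf a x).card)).ord) ∧
      (∀ β β', β < β' → β' < (Order.succ (Order.succ a)).ord →
        ∀ᶠ x in (W : Filter (PkL a (Order.succ a).ord)), g β x < g β' x) := by
  classical
  set E : Ordinal → Ordinal → Ordinal := fun β =>
    if h : #(Set.Iio β) ≤ #(Set.Iio (Order.succ a).ord) then (exists_injOn h).choose else id
    with hE_def
  have hE : ∀ β < (Order.succ (Order.succ a)).ord,
      Set.InjOn (E β) (Set.Iio β) ∧
        Set.MapsTo (E β) (Set.Iio β) (Set.Iio (Order.succ a).ord) := by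
    intro β hβ
    have hcard : #(Set.Iio β) ≤ #(Set.Iio (Order.succ a).ord) := by
      rw [Ordinal.mk_Iio_ordinal, Ordinal.mk_Iio_ordinal, Cardinal.lift_le, Cardinal.card_ord]
      exact Order.lt_succ_iff.mp (Cardinal.lt_ord.mp hβ)
    rw [hE_def]
    simp only
    rw [dif_pos hcard]
    exact (exists_injOn hcard).choose_spec
  refine ⟨fun β x => otp0 {ξ | ξ < β ∧ E β ξ ∈ x.val}, ?_, ?_⟩
  · intro β hβ
    filter_upwards [size_le hreg hcomp hfine hnorm] with x hx
    set s : Set Ordinal := {ξ | ξ < β ∧ E β ξ ∈ x.val} with hs_def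
    have hssub : s ⊆ Set.Iio β := fun ξ hξ => hξ.1
    have hsx : #(↥s) ≤ Cardinal.mk x.val := by
      refine Cardinal.mk_le_of_injective (f := fun ξ : ↥s => (⟨E β ξ.1, ξ.2.2⟩ : ↥x.val)) ?_
      intro ξ ξ' hξξ'
      exact Subtype.ext ((hE β hβ).1 ξ.2.1 ξ'.2.1 (congrArg Subtype.val hξξ'))
    have hcard : Cardinal.lift.{1,0} (otp0 s).card ≤
        Cardinal.lift.{1,0} (Order.succ (ordOf a x).card) := by
      rw [otp0_card hssub]
      exact le_trans hsx hx
    rw [Cardinal.lift_le] at hcard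
    rw [Cardinal.lt_ord]
    exact lt_of_le_of_lt hcard (Order.lt_succ _)
  · intro β β' hββ' hβ'
    have hβ : β < (Order.succ (Order.succ a)).ord := lt_trans hββ' hβ'
    set t : Ordinal → Ordinal := fun η =>
      if h : ∃ ξ, ξ < β ∧ E β ξ = η then E β' h.choose else 0 with ht_def
    have htval : ∀ η, t η < (Order.succ a).ord := by
      intro η
      rw [ht_def]
      by_cases h : ∃ ξ, ξ < β ∧ E β ξ = η
      · simp only [dif_pos h]
        exact (hE β' hβ').2 (lt_trans h.choose_spec.1 hββ')
      · simp only [dif_neg h]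
        exact lam_pos
    have hclos := closure₁ hfine hnorm t (fun η _ => htval η)
    have hmemE : ∀ᶠ x in (W : Filter (PkL a (Order.succ a).ord)), E β' β ∈ x.val :=
      eventually_mem hfine ((hE β' hβ').2 hββ')
    filter_upwards [hclos, hmemE] with x hx hxE
    set s : Set Ordinal := {ξ | ξ < β ∧ E β ξ ∈ x.val} with hs_def
    set s' : Set Ordinal := {ξ | ξ < β' ∧ E β' ξ ∈ x.val} with hs'_def
    have hss' : s ⊆ s' := by
      rintro ξ ⟨hξβ, hξx⟩
      have ht1 : t (E β ξ) ∈ x.val := hx _ hξx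
      have hex : ∃ ξ', ξ' < β ∧ E β ξ' = E β ξ := ⟨ξ, hξβ, rfl⟩
      have hchoose : hex.choose = ξ :=
        (hE β hβ).1 hex.choose_spec.1 hξβ hex.choose_spec.2
      rw [ht_def] at ht1
      simp only [dif_pos hex, hchoose] at ht1
      exact ⟨lt_trans hξβ hββ', ht1⟩
    have hβs' : β ∈ s' := ⟨hββ', hxE⟩
    exact otp0_strict hss' hβs' (fun ξ hξ => hξ.1) (fun ξ hξ => hξ.1)
  

universe v

theorem kfac_coe (u : Ordinal → Ordinal) :
    kfac a W (↑u : Filter.Germ (UK a W : Filter Ordinal) Ordinal) =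
      (↑((u ∘ ordOf a : PkL a (Order.succ a).ord → Ordinal)) :
        Filter.Germ (W : Filter (PkL a (Order.succ a).ord)) Ordinal) := by
  rw [kfac]
  exact Filter.Germ.coe_compTendsto u (tendsto_ordOf a W)

theorem kfac_lt_iff (n n' : Filter.Germ (UK a W : Filter Ordinal) Ordinal.{0}) :
    n < n' ↔ kfac a W n < kfac a W n' := by
  induction n using Filter.Germ.inductionOn with
  | h u =>
  induction n' using Filter.Germ.inductionOn with
  | h v =>
  rw [kfac_coe u, kfac_coe v, germ_lt_iff, germ_lt_iff]
  exact eventually_UK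

/-- Part (i): the factor map fixes every ordinal below `(α⁺⁺)^N`. -/
theorem part_one (hreg : a.IsRegular) (hcomp : UFComplete a W)
    (hfine : IsFine a (Order.succ a).ord W) (hnorm : IsNormalM a (Order.succ a).ord W)
    (oN : Filter.Germ (UK a W : Filter Ordinal) Ordinal ≃o Ordinal.{v})
    (oM : Filter.Germ (W : Filter (PkL a (Order.succ a).ord)) Ordinal ≃o Ordinal.{v}) :
    ∀ β, β < oN ((fun ζ : Ordinal => (Order.succ (Order.succ ζ.card)).ord :
        Filter.Germ (UK a W : Filter Ordinal) Ordinal)) →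
      oM (kfac a W (oN.symm β)) = β := by
  classical
  set f₀ : Ordinal → Ordinal := fun ζ => (Order.succ (Order.succ ζ.card)).ord with hf₀_def
  set γ : Ordinal.{v} := oN (↑f₀ : Filter.Germ (UK a W : Filter Ordinal) Ordinal) with hγ_def
  set h : Ordinal.{v} → Ordinal.{v} := fun β => oM (kfac a W (oN.symm β)) with hh_def
  have hsymmγ : oN.symm γ = (↑f₀ : Filter.Germ (UK a W : Filter Ordinal) Ordinal) := by
    rw [hγ_def]
    exact OrderIso.symm_apply_apply _ _
  have hmono : StrictMono h := fun β β' hββ' =>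
    oM.strictMono ((kfac_lt_iff _ _).mp (oN.symm.strictMono hββ'))
  intro β
  induction β using Ordinal.induction with
  | h β IH =>
  intro hβγ
  refine le_antisymm ?_ hmono.le_apply
  by_contra hcon
  rw [not_le] at hcon
  obtain ⟨u, hu⟩ : ∃ u : Ordinal → Ordinal,
      (↑u : Filter.Germ (UK a W : Filter Ordinal) Ordinal) = oN.symm β :=
    (oN.symm β).inductionOn (fun w => ⟨w, rfl⟩)
  have hnγ : oN.symm β < (↑f₀ : Filter.Germ (UK a W : Filter Ordinal) Ordinal) := by
    have := oN.symm.strictMono hβγ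
    rwa [hsymmγ] at this
  have hult : ∀ᶠ ζ in (UK a W : Filter Ordinal), u ζ < f₀ ζ :=
    germ_lt_iff.mp (hu ▸ hnγ)
  set f : Ordinal → Ordinal := fun ζ => if u ζ < f₀ ζ then u ζ else 0 with hf_def
  have hff₀ : ∀ ζ, f ζ < (Order.succ (Order.succ ζ.card)).ord := by
    intro ζ
    rw [hf_def]
    by_cases hc : u ζ < f₀ ζ
    · simp only [if_pos hc]
      exact hc
    · simp only [if_neg hc]
      exact f0_pos ζ
  have hfu : (↑f : Filter.Germ (UK a W : Filter Ordinal) Ordinal) = oN.symm β := by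
    rw [← hu]
    refine Filter.Germ.coe_eq.mpr ?_
    filter_upwards [hult] with ζ hζ
    rw [hf_def]
    simp only [if_pos hζ]
  have hmlt : oM.symm β < kfac a W (oN.symm β) := by
    have h1 := oM.symm.strictMono hcon
    have h2 : oM.symm (h β) = kfac a W (oN.symm β) := by
      rw [hh_def]
      exact OrderIso.symm_apply_apply _ _
    rwa [h2] at h1
  obtain ⟨g, hg⟩ : ∃ g : PkL a (Order.succ a).ord → Ordinal,
      (↑g : Filter.Germ (W : Filter (PkL a (Order.succ a).ord)) Ordinal) = oM.symm β :=
    (oM.symm β).inductionOn (fun w => ⟨w, rfl⟩)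
  have hg_lt : ∀ᶠ x in (W : Filter (PkL a (Order.succ a).ord)), g x < f (ordOf a x) := by
    have h1 : (↑g : Filter.Germ (W : Filter (PkL a (Order.succ a).ord)) Ordinal) <
        (↑((f ∘ ordOf a : PkL a (Order.succ a).ord → Ordinal)) :
          Filter.Germ (W : Filter (PkL a (Order.succ a).ord)) Ordinal) := by
      rw [hg, ← kfac_coe f, hfu]
      exact hmlt
    exact germ_lt_iff.mp h1
  obtain ⟨F, hF⟩ := star hreg hcomp hfine hnorm f hff₀ g hg_lt
  have hFγ : kfac a W (↑F : Filter.Germ (UK a W : Filter Ordinal) Ordinal) = oM.symm β := by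
    rw [kfac_coe F, ← hg]
    exact Filter.Germ.coe_eq.mpr (by filter_upwards [hF] with x hx; exact hx)
  have hβ' : oN (↑F : Filter.Germ (UK a W : Filter Ordinal) Ordinal) < β := by
    have h1 : (↑F : Filter.Germ (UK a W : Filter Ordinal) Ordinal) < oN.symm β := by
      refine (kfac_lt_iff _ _).mpr ?_
      rw [hFγ]
      exact hmlt
    have := oN.strictMono h1
    rwa [OrderIso.apply_symm_apply] at this
  have hhβ' : h (oN (↑F : Filter.Germ (UK a W : Filter Ordinal) Ordinal)) = β := by
    rw [hh_def]
    simp only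
    rw [OrderIso.symm_apply_apply, hFγ, OrderIso.apply_symm_apply]
  have hIH := IH _ hβ' (lt_trans hβ' hβγ)
  have heq : oN (↑F : Filter.Germ (UK a W : Filter Ordinal) Ordinal) = β := by
    rw [← hIH]
    exact hhβ'
  exact absurd heq (ne_of_lt hβ')

/-- Part (ii): the factor map moves `(α⁺⁺)^N`. -/
theorem part_two (hreg : a.IsRegular)
    (hGCH : ∀ c : Cardinal.{0}, Cardinal.aleph0 ≤ c → 2 ^ c = Order.succ c)
    (hcomp : UFComplete a W)
    (hfine : IsFine a (Order.succ a).ord W) (hnorm : IsNormalM a (Order.succ a).ord W)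
    (oN : Filter.Germ (UK a W : Filter Ordinal) Ordinal ≃o Ordinal.{v})
    (oM : Filter.Germ (W : Filter (PkL a (Order.succ a).ord)) Ordinal ≃o Ordinal.{v}) :
    oN ((fun ζ : Ordinal => (Order.succ (Order.succ ζ.card)).ord :
        Filter.Germ (UK a W : Filter Ordinal) Ordinal)) <
      oM (kfac a W (oN.symm (oN ((fun ζ : Ordinal =>
        (Order.succ (Order.succ ζ.card)).ord :
          Filter.Germ (UK a W : Filter Ordinal) Ordinal))))) := by
  classical
  set f₀ : Ordinal → Ordinal := fun ζ => (Order.succ (Order.succ ζ.card)).ord with hf₀_def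
  set γ : Ordinal.{v} := oN (↑f₀ : Filter.Germ (UK a W : Filter Ordinal) Ordinal) with hγ_def
  have hsymmγ : oN.symm γ = (↑f₀ : Filter.Germ (UK a W : Filter Ordinal) Ordinal) := by
    rw [hγ_def]
    exact OrderIso.symm_apply_apply _ _
  have hγform : oM (kfac a W (oN.symm γ)) =
      oM ((↑((f₀ ∘ ordOf a : PkL a (Order.succ a).ord → Ordinal)) :
        Filter.Germ (W : Filter (PkL a (Order.succ a).ord)) Ordinal)) := by
    rw [hsymmγ, kfac_coe f₀]
  -- Counting: `γ < (lift α⁺⁺).ord`.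
  have hγcard : γ.card ≤ Cardinal.lift.{v,0} (Order.succ a) := by
    have hrep : ∀ β : ↥(Set.Iio γ), ∃ u : Ordinal → Ordinal,
        (↑u : Filter.Germ (UK a W : Filter Ordinal) Ordinal) = oN.symm β.1 := fun β =>
      (oN.symm β.1).inductionOn (fun w => ⟨w, rfl⟩)
    set R : ↥(Set.Iio γ) → Ordinal → Ordinal := fun β => (hrep β).choose with hR_def
    have hRspec : ∀ β : ↥(Set.Iio γ),
        (↑(R β) : Filter.Germ (UK a W : Filter Ordinal) Ordinal) = oN.symm β.1 := fun β =>
      (hrep β).choose_spec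
    have hUKa : ∀ᶠ ζ in (UK a W : Filter Ordinal), ζ < a.ord :=
      eventually_UK.mpr (Filter.Eventually.of_forall (fun x => ordOf_lt hreg x))
    have hRlt : ∀ β : ↥(Set.Iio γ), ∀ᶠ ζ in (UK a W : Filter Ordinal), R β ζ < f₀ ζ := by
      intro β
      refine germ_lt_iff.mp ?_
      rw [hRspec β]
      have h1 : oN.symm β.1 < oN.symm γ := oN.symm.strictMono β.2
      rwa [hsymmγ] at h1
    set J : ↥(Set.Iio γ) → (↥(Set.Iio a.ord) → ↥(Set.Iio (Order.succ a).ord)) := fun β ζ =>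
      if hv : R β ζ.1 < (Order.succ a).ord then ⟨R β ζ.1, hv⟩ else ⟨0, lam_pos⟩ with hJ_def
    have hJinj : Function.Injective J := by
      intro β β' hJeq
      have hgerm : (↑(R β) : Filter.Germ (UK a W : Filter Ordinal) Ordinal) = ↑(R β') := by
        refine Filter.Germ.coe_eq.mpr ?_
        filter_upwards [hUKa, hRlt β, hRlt β'] with ζ h1 h2 h3
        have hcard : ζ.card < a := Cardinal.lt_ord.mp h1
        have hbound : f₀ ζ ≤ (Order.succ a).ord :=
          Cardinal.ord_le_ord.2 (Order.succ_le_succ (Order.succ_le_of_lt hcard))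
        have hv : R β ζ < (Order.succ a).ord := lt_of_lt_of_le h2 hbound
        have hv' : R β' ζ < (Order.succ a).ord := lt_of_lt_of_le h3 hbound
        have := congrFun hJeq ⟨ζ, h1⟩
        rw [hJ_def] at this
        simp only [dif_pos hv, dif_pos hv'] at this
        exact congrArg Subtype.val this
      have h4 : oN.symm β.1 = oN.symm β'.1 := by
        rw [← hRspec β, ← hRspec β', hgerm]
      have := congrArg oN h4
      rw [OrderIso.apply_symm_apply, OrderIso.apply_symm_apply] at this
      exact Subtype.ext this
    have hmkle : Cardinal.lift.{1} #(↥(Set.Iio γ)) ≤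
        Cardinal.lift.{v+1} #(↥(Set.Iio a.ord) → ↥(Set.Iio (Order.succ a).ord)) :=
      Cardinal.lift_mk_le'.mpr ⟨⟨J, hJinj⟩⟩
    have hmkarrow : #(↥(Set.Iio a.ord) → ↥(Set.Iio (Order.succ a).ord)) =
        Cardinal.lift.{1,0} (Order.succ a) := by
      rw [← Cardinal.power_def, Ordinal.mk_Iio_ordinal, Ordinal.mk_Iio_ordinal,
        Cardinal.card_ord, Cardinal.card_ord, ← Cardinal.lift_power, hpow_gch hreg hGCH]
    rw [hmkarrow, Ordinal.mk_Iio_ordinal, Cardinal.lift_lift, Cardinal.lift_lift] at hmkle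
    have hsplit : Cardinal.lift.{v+1,0} (Order.succ a) =
        Cardinal.lift.{v+1,v} (Cardinal.lift.{v,0} (Order.succ a)) := by
      rw [Cardinal.lift_lift]
    rw [hsplit] at hmkle
    exact Cardinal.lift_le.mp hmkle
  have hγlt_ssa : γ < (Cardinal.lift.{v,0} (Order.succ (Order.succ a))).ord := by
    rw [Cardinal.lt_ord]
    exact lt_of_le_of_lt hγcard (Cardinal.lift_lt.mpr (Order.lt_succ _))
  -- The chain of length `α⁺⁺` below `h γ`.
  obtain ⟨g, hg1, hg2⟩ := exists_family hreg hcomp hfine hnorm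
  set ψ : Ordinal.{0} → Ordinal.{v} := fun β =>
    oM (↑(g β) : Filter.Germ (W : Filter (PkL a (Order.succ a).ord)) Ordinal) with hψ_def
  have hψmono : ∀ β β', β < β' → β' < (Order.succ (Order.succ a)).ord → ψ β < ψ β' :=
    fun β β' h1 h2 => oM.strictMono (germ_lt_iff.mpr (hg2 β β' h1 h2))
  have hψlt : ∀ β < (Order.succ (Order.succ a)).ord, ψ β < oM (kfac a W (oN.symm γ)) := by
    intro β hβ
    rw [hγform]
    refine oM.strictMono (germ_lt_iff.mpr ?_)
    filter_upwards [hg1 β hβ] with x hx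
    exact hx
  have hψle : ∀ β, β < (Order.succ (Order.succ a)).ord → Ordinal.lift.{v,0} β ≤ ψ β := by
    intro β
    induction β using Ordinal.induction with
    | h β IH =>
    intro hβ
    by_contra hcon
    rw [not_le] at hcon
    obtain ⟨b', hb'⟩ := Ordinal.mem_range_lift_of_le (le_of_lt hcon)
    have hb'β : b' < β := by
      rw [← Ordinal.lift_lt.{v,0}, hb']
      exact hcon
    have h1 := IH b' hb'β (lt_trans hb'β hβ)
    have h2 := hψmono b' β hb'β hβ
    rw [hb'] at h1
    exact absurd (lt_of_le_of_lt h1 h2) (lt_irrefl _)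
  have hX : (Cardinal.lift.{v,0} (Order.succ (Order.succ a))).ord ≤
      oM (kfac a W (oN.symm γ)) := by
    by_contra hcon
    rw [not_le, ← Cardinal.lift_ord] at hcon
    obtain ⟨b, hb⟩ := Ordinal.mem_range_lift_of_le (le_of_lt hcon)
    have hbssa : b < (Order.succ (Order.succ a)).ord := by
      rw [← Ordinal.lift_lt.{v,0}, hb]
      exact hcon
    have h1 := hψle b hbssa
    rw [hb] at h1
    exact absurd (lt_of_le_of_lt h1 (hψlt b hbssa)) (lt_irrefl _)
  exact lt_of_lt_of_le hγlt_ssa hX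

end Measure

end CritAux


/-- (GCH) Let `j : V → M` be the ultrapower embedding of a normal measure `W` on
`P_α(α⁺)`, `ι : V → N` the ultrapower embedding of the projection `W↾α`, and
`k : N → M` the factor map `k([f]) = j(f)(α)`.  Identifying the ordinals of `N`
(resp. `M`) with actual ordinals via the unique order isomorphism (Mostowski
collapse) `oN` (resp. `oM`), the critical point of `k` is `(α⁺⁺)^N`, which by Łoś
is the collapse of the germ of `ζ ↦ ζ⁺⁺`. -/
theorem crit_of_factor_map
    (a : Cardinal.{0}) (hreg : a.IsRegular) (hunc : Cardinal.aleph0 < a)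
    (hGCH : ∀ c : Cardinal.{0}, Cardinal.aleph0 ≤ c → 2 ^ c = Order.succ c)
    (W : Ultrafilter (PkL a (Order.succ a).ord))
    (hcomp : UFComplete a W)
    (hfine : IsFine a (Order.succ a).ord W)
    (hnorm : IsNormalM a (Order.succ a).ord W)
    (oN : Filter.Germ (UK a W : Filter Ordinal) Ordinal ≃o Ordinal)
    (oM : Filter.Germ (W : Filter (PkL a (Order.succ a).ord)) Ordinal ≃o Ordinal) :
    sInf {β : Ordinal | oM (kfac a W (oN.symm β)) ≠ β} =
      oN ((fun ζ : Ordinal => (Order.succ (Order.succ ζ.card)).ord :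
        Filter.Germ (UK a W : Filter Ordinal) Ordinal)) := by
  have hfix := CritAux.part_one hreg hcomp hfine hnorm oN oM
  have hγlt := CritAux.part_two hreg hGCH hcomp hfine hnorm oN oM
  set γ := oN ((fun ζ : Ordinal => (Order.succ (Order.succ ζ.card)).ord :
    Filter.Germ (UK a W : Filter Ordinal) Ordinal)) with hγ_def
  have hγmem : oM (kfac a W (oN.symm γ)) ≠ γ := ne_of_gt hγlt
  refine le_antisymm (csInf_le (OrderBot.bddBelow _) hγmem) (le_csInf ⟨γ, hγmem⟩ ?_)
  intro b hb
  by_contra hcon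
  rw [not_le] at hcon
  exact hb (hfix b hcon)
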